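/- Let 1 ≤ p ≤ q < ∞ and let (X,d) be a line fitting metric space that satisfies the (p,q)-metric cotype inequality with constant Γ ≥ 1 and scaling function m(·). Then the unit interval [0,1], with the standard metric, satisfies the (p,q)-metric cotype inequality with constant 4Γ and the same scaling function m(·). -/

import Mathlib

open scoped BigOperators

noncomputable def cotypeLHS {X : Type*} [PseudoMetricSpace X] (p : ℝ) (n m : ℕ) (hm : m ≠ 0)
    (f : (Fin n → ZMod m) → X) : ℝ :=
  haveI : NeZero m := ⟨hm⟩
  (∑ ε : Fin n → ZMod m, ∑ j : Fin n,
      dist (f ε) (f (ε + fun i => if i = j then ((m / 2 : ℕ) : ZMod m) else 0)) ^ p) / (m : ℝ) ^ n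

noncomputable def cotypeRHS {X : Type*} [PseudoMetricSpace X] (p : ℝ) (n m : ℕ) (hm : m ≠ 0)
    (f : (Fin n → ZMod m) → X) : ℝ :=
  haveI : NeZero m := ⟨hm⟩
  (∑ ε : Fin n → ZMod m, ∑ δ : Fin n → Fin 3,
      dist (f ε) (f (ε + fun i => (((δ i : ℤ) - 1 : ℤ) : ZMod m))) ^ p) / ((m : ℝ) ^ n * 3 ^ n)

/-- The `(p,q)`-metric cotype inequality with constant `Γ` for given `n` and `m`. -/
def SatisfiesCotype (X : Type*) [PseudoMetricSpace X] (p q Γ : ℝ) (n m : ℕ) (hm : m ≠ 0) : Prop :=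
  ∀ f : (Fin n → ZMod m) → X,
    cotypeLHS p n m hm f ≤ Γ ^ p * (m : ℝ) ^ p * (n : ℝ) ^ (1 - p / q) * cotypeRHS p n m hm f

/-- `X` supports a `(p,q)`-metric cotype inequality. -/
def SupportsCotype (X : Type*) [PseudoMetricSpace X] (p q : ℝ) : Prop :=
  ∃ Γ : ℝ, 1 ≤ Γ ∧ ∃ m : ℕ → ℕ, ∃ h : ∀ n, Even (m n) ∧ 0 < m n,
    ∀ n, SatisfiesCotype X p q Γ n (m n) (h n).2.ne'

/-- `ρ` is a metric on the set `X`. -/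
def IsMetricOn {X : Type*} (ρ : X → X → ℝ) : Prop :=
  (∀ x y, 0 ≤ ρ x y) ∧ (∀ x y, ρ x y = 0 ↔ x = y) ∧ (∀ x y, ρ x y = ρ y x) ∧
    ∀ x y z, ρ x z ≤ ρ x y + ρ y z

/-- `(X,d)` is line fitting: for every `c > 0` there are `λ_c > 0` and a metric `ρ` on
the disjoint union `X ⊔ [0,1]` restricting to `λ_c·d` on `X × X` and to the standard
metric on `[0,1] × [0,1]`, with every `t ∈ [0,1]` within distance `c` of a point of `X`. -/
def LineFitting (X : Type*) [MetricSpace X] : Prop :=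
  ∀ c : ℝ, 0 < c →
    ∃ (lam : ℝ) (ρ : (X ⊕ Set.Icc (0 : ℝ) 1) → (X ⊕ Set.Icc (0 : ℝ) 1) → ℝ),
      0 < lam ∧ IsMetricOn ρ ∧
      (∀ x y : X, ρ (Sum.inl x) (Sum.inl y) = lam * dist x y) ∧
      (∀ s t : Set.Icc (0 : ℝ) 1, ρ (Sum.inr s) (Sum.inr t) = dist s t) ∧
      (∀ t : Set.Icc (0 : ℝ) 1, ∃ x : X, ρ (Sum.inl x) (Sum.inr t) < c)

section Aux

/-- Minkowski-type comparison: if `u i ≤ v i + c` termwise then the `ℓ^p` norm of `u`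
is at most the `ℓ^p` norm of `v` plus `c · card^{1/p}`. -/
lemma sum_rpow_le_of_le_add {ι : Type*} (s : Finset ι) (u v : ι → ℝ) {p c : ℝ}
    (hp : 1 ≤ p) (hc : 0 ≤ c) (hu : ∀ i ∈ s, 0 ≤ u i) (hv : ∀ i ∈ s, 0 ≤ v i)
    (h : ∀ i ∈ s, u i ≤ v i + c) :
    (∑ i ∈ s, u i ^ p) ^ (1 / p) ≤
      (∑ i ∈ s, v i ^ p) ^ (1 / p) + c * (s.card : ℝ) ^ (1 / p) := by
  have hp0 : (0 : ℝ) < p := lt_of_lt_of_le one_pos hp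
  have h1 : (∑ i ∈ s, u i ^ p) ≤ ∑ i ∈ s, (v i + c) ^ p :=
    Finset.sum_le_sum fun i hi => Real.rpow_le_rpow (hu i hi) (h i hi) hp0.le
  have h2 : (∑ i ∈ s, u i ^ p) ^ (1 / p) ≤ (∑ i ∈ s, (v i + c) ^ p) ^ (1 / p) :=
    Real.rpow_le_rpow (Finset.sum_nonneg fun i hi => Real.rpow_nonneg (hu i hi) p) h1
      (by positivity)
  have h3 := Real.Lp_add_le_of_nonneg (f := v) (g := fun _ => c) s hp hv (fun i _ => hc)
  have h4 : (∑ _i ∈ s, c ^ p) ^ (1 / p) = c * (s.card : ℝ) ^ (1 / p) := by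
    rw [Finset.sum_const, nsmul_eq_mul,
      Real.mul_rpow (Nat.cast_nonneg _) (Real.rpow_nonneg hc p), ← Real.rpow_mul hc,
      mul_one_div, div_self hp0.ne', Real.rpow_one, mul_comm]
  calc (∑ i ∈ s, u i ^ p) ^ (1 / p) ≤ (∑ i ∈ s, (v i + c) ^ p) ^ (1 / p) := h2
    _ ≤ (∑ i ∈ s, v i ^ p) ^ (1 / p) + (∑ _i ∈ s, c ^ p) ^ (1 / p) := h3
    _ = (∑ i ∈ s, v i ^ p) ^ (1 / p) + c * (s.card : ℝ) ^ (1 / p) := by rw [h4]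

lemma cotypeLHS_nonneg {X : Type*} [PseudoMetricSpace X] (p : ℝ) (n m : ℕ) (hm : m ≠ 0)
    (f : (Fin n → ZMod m) → X) : 0 ≤ cotypeLHS p n m hm f := by
  haveI : NeZero m := ⟨hm⟩
  unfold cotypeLHS
  apply div_nonneg _ (by positivity)
  exact Finset.sum_nonneg fun ε _ => Finset.sum_nonneg fun j _ =>
    Real.rpow_nonneg dist_nonneg p

lemma cotypeRHS_nonneg {X : Type*} [PseudoMetricSpace X] (p : ℝ) (n m : ℕ) (hm : m ≠ 0)
    (f : (Fin n → ZMod m) → X) : 0 ≤ cotypeRHS p n m hm f := by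
  haveI : NeZero m := ⟨hm⟩
  unfold cotypeRHS
  apply div_nonneg _ (by positivity)
  exact Finset.sum_nonneg fun ε _ => Finset.sum_nonneg fun δ _ =>
    Real.rpow_nonneg dist_nonneg p

end Aux

/-- **If a line fitting metric space satisfies the `(p,q)`-metric cotype inequality with
constant `Γ` and scaling function `m(·)`, then the unit interval `[0,1]` satisfies it
with constant `4Γ` and the same scaling function.** -/
theorem cotype_of_lineFitting {X : Type*} [MetricSpace X] (hX : LineFitting X)
    (p q Γ : ℝ) (hp : 1 ≤ p) (hpq : p ≤ q) (hΓ : 1 ≤ Γ)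
    (m : ℕ → ℕ) (hm : ∀ n, Even (m n) ∧ 0 < m n)
    (hcot : ∀ n : ℕ, SatisfiesCotype X p q Γ n (m n) (hm n).2.ne') :
    ∀ n : ℕ, SatisfiesCotype (Set.Icc (0 : ℝ) 1) p q (4 * Γ) n (m n) (hm n).2.ne' := by
  intro n f
  have hM0 : (m n) ≠ 0 := (hm n).2.ne'
  haveI : NeZero (m n) := ⟨hM0⟩
  have hp0 : (0 : ℝ) < p := lt_of_lt_of_le one_pos hp
  have hΓ0 : (0 : ℝ) ≤ Γ := le_trans zero_le_one hΓ
  set M : ℝ := (m n : ℝ) with hMdef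
  have hMpos : (0 : ℝ) < M := by rw [hMdef]; exact_mod_cast (hm n).2
  have hR0 : 0 ≤ cotypeRHS p n (m n) hM0 f := cotypeRHS_nonneg p n (m n) hM0 f
  -- reduce to constant Γ instead of 4Γ
  suffices hmain : cotypeLHS p n (m n) hM0 f ≤
      Γ ^ p * M ^ p * (n : ℝ) ^ (1 - p / q) * cotypeRHS p n (m n) hM0 f by
    refine le_trans hmain ?_
    have h4 : Γ ^ p ≤ (4 * Γ) ^ p :=
      Real.rpow_le_rpow hΓ0 (by linarith) hp0.le
    have h5 : 0 ≤ M ^ p * (n : ℝ) ^ (1 - p / q) * cotypeRHS p n (m n) hM0 f :=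
      mul_nonneg (mul_nonneg (Real.rpow_nonneg hMpos.le _)
        (Real.rpow_nonneg (Nat.cast_nonneg _) _)) hR0
    calc Γ ^ p * M ^ p * (n : ℝ) ^ (1 - p / q) * cotypeRHS p n (m n) hM0 f
        = Γ ^ p * (M ^ p * (n : ℝ) ^ (1 - p / q) * cotypeRHS p n (m n) hM0 f) := by ring
      _ ≤ (4 * Γ) ^ p * (M ^ p * (n : ℝ) ^ (1 - p / q) * cotypeRHS p n (m n) hM0 f) :=
          mul_le_mul_of_nonneg_right h4 h5
      _ = (4 * Γ) ^ p * M ^ p * (n : ℝ) ^ (1 - p / q) * cotypeRHS p n (m n) hM0 f := by ring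
  -- trivial case n = 0
  rcases Nat.eq_zero_or_pos n with hn | hn
  · subst hn
    have hL : cotypeLHS p 0 (m 0) hM0 f = 0 := by
      unfold cotypeLHS
      simp
    rw [hL]
    have h6 : 0 ≤ Γ ^ p * M ^ p * ((0 : ℕ) : ℝ) ^ (1 - p / q) :=
      mul_nonneg (mul_nonneg (Real.rpow_nonneg hΓ0 _) (Real.rpow_nonneg hMpos.le _))
        (Real.rpow_nonneg (Nat.cast_nonneg _) _)
    exact mul_nonneg h6 hR0
  -- main case
  set K : ℝ := Γ ^ p * M ^ p * (n : ℝ) ^ (1 - p / q) with hKdef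
  have hK0 : 0 < K := by
    refine mul_pos (mul_pos (Real.rpow_pos_of_pos (by linarith) p)
      (Real.rpow_pos_of_pos hMpos p)) (Real.rpow_pos_of_pos ?_ _)
    exact_mod_cast hn
  set N : ℝ := M ^ n with hNdef
  have hN0 : (0 : ℝ) < N := pow_pos hMpos n
  have hNne : N ≠ 0 := hN0.ne'
  have h3pos : (0 : ℝ) < 3 ^ n := by positivity
  have h3ne : (3 : ℝ) ^ n ≠ 0 := h3pos.ne'
  -- index types and unnormalized sums
  set sh1 : ((Fin n → ZMod (m n)) × Fin n) → (Fin n → ZMod (m n)) :=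
    fun i => i.1 + fun k => if k = i.2 then ((m n / 2 : ℕ) : ZMod (m n)) else 0 with hsh1
  set sh2 : ((Fin n → ZMod (m n)) × (Fin n → Fin 3)) → (Fin n → ZMod (m n)) :=
    fun i => i.1 + fun k => (((i.2 k : ℤ) - 1 : ℤ) : ZMod (m n)) with hsh2
  set SA : ℝ := ∑ i : (Fin n → ZMod (m n)) × Fin n, dist (f i.1) (f (sh1 i)) ^ p with hSA
  set TA : ℝ := ∑ i : (Fin n → ZMod (m n)) × (Fin n → Fin 3),
      dist (f i.1) (f (sh2 i)) ^ p with hTA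
  have hSA0 : 0 ≤ SA := Finset.sum_nonneg fun i _ => Real.rpow_nonneg dist_nonneg p
  have hTA0 : 0 ≤ TA := Finset.sum_nonneg fun i _ => Real.rpow_nonneg dist_nonneg p
  have hcard : (Fintype.card (Fin n → ZMod (m n)) : ℝ) = N := by
    rw [hNdef, hMdef]
    norm_cast
    simp [ZMod.card]
  have hLeq : cotypeLHS p n (m n) hM0 f = SA / N := by
    unfold cotypeLHS
    rw [hSA, Fintype.sum_prod_type]
  have hReq : cotypeRHS p n (m n) hM0 f = TA / (N * 3 ^ n) := by
    unfold cotypeRHS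
    rw [hTA, Fintype.sum_prod_type]
  -- the constant in the error term
  set C : ℝ := (2 * (K / 3 ^ n) ^ (1 / p) * (N * 3 ^ n) ^ (1 / p)
      + 2 * (N * n) ^ (1 / p)) / N ^ (1 / p) with hCdef
  have hC0 : 0 ≤ C := by positivity
  have hNp : (0 : ℝ) < N ^ (1 / p) := Real.rpow_pos_of_pos hN0 _
  -- the key claim, for every c > 0
  have claim : ∀ c : ℝ, 0 < c →
      (cotypeLHS p n (m n) hM0 f) ^ (1 / p) ≤
        (K * cotypeRHS p n (m n) hM0 f) ^ (1 / p) + C * c := by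
    intro c hc
    obtain ⟨lam, ρ, hlam, ⟨ρ0, _, ρsymm, ρtri⟩, hXX, hII, hnear⟩ := hX c hc
    set x : Set.Icc (0 : ℝ) 1 → X := fun t => (hnear t).choose with hxdef
    have hx : ∀ t, ρ (Sum.inl (x t)) (Sum.inr t) < c := fun t => (hnear t).choose_spec
    set g : (Fin n → ZMod (m n)) → X := fun ε => x (f ε) with hgdef
    -- two-sided comparison of distances
    have key : ∀ t t' : Set.Icc (0 : ℝ) 1,
        dist t t' ≤ lam * dist (x t) (x t') + 2 * c ∧
        lam * dist (x t) (x t') ≤ dist t t' + 2 * c := by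
      intro t t'
      have e1 : dist t t' = ρ (Sum.inr t) (Sum.inr t') := (hII t t').symm
      have e2 : lam * dist (x t) (x t') = ρ (Sum.inl (x t)) (Sum.inl (x t')) :=
        (hXX _ _).symm
      have t1 := ρtri (Sum.inr t) (Sum.inl (x t)) (Sum.inr t')
      have t2 := ρtri (Sum.inl (x t)) (Sum.inl (x t')) (Sum.inr t')
      have t3 := ρtri (Sum.inl (x t)) (Sum.inr t) (Sum.inl (x t'))
      have t4 := ρtri (Sum.inr t) (Sum.inr t') (Sum.inl (x t'))
      have s1 : ρ (Sum.inr t) (Sum.inl (x t)) = ρ (Sum.inl (x t)) (Sum.inr t) := ρsymm _ _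
      have s2 : ρ (Sum.inl (x t')) (Sum.inr t') = ρ (Sum.inr t') (Sum.inl (x t')) := ρsymm _ _
      have h1 := hx t
      have h2 := hx t'
      constructor
      · rw [e1, e2]; linarith
      · rw [e1, e2]; linarith
    -- unnormalized sums for g
    set Sd : ℝ := ∑ i : (Fin n → ZMod (m n)) × Fin n,
        dist (g i.1) (g (sh1 i)) ^ p with hSd
    set Td : ℝ := ∑ i : (Fin n → ZMod (m n)) × (Fin n → Fin 3),
        dist (g i.1) (g (sh2 i)) ^ p with hTd
    set SB : ℝ := ∑ i : (Fin n → ZMod (m n)) × Fin n,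
        (lam * dist (g i.1) (g (sh1 i))) ^ p with hSB
    set TB : ℝ := ∑ i : (Fin n → ZMod (m n)) × (Fin n → Fin 3),
        (lam * dist (g i.1) (g (sh2 i))) ^ p with hTB
    have hSB0 : 0 ≤ SB := Finset.sum_nonneg fun i _ =>
      Real.rpow_nonneg (mul_nonneg hlam.le dist_nonneg) p
    have hTB0 : 0 ≤ TB := Finset.sum_nonneg fun i _ =>
      Real.rpow_nonneg (mul_nonneg hlam.le dist_nonneg) p
    have hlamp : (0 : ℝ) < lam ^ p := Real.rpow_pos_of_pos hlam p
    -- cotype for g, scaled by lam^p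
    have hcotg : SB ≤ (K / 3 ^ n) * TB := by
      have hg := hcot n g
      have hLg : cotypeLHS p n (m n) hM0 g = Sd / N := by
        unfold cotypeLHS
        rw [hSd, Fintype.sum_prod_type]
      have hRg : cotypeRHS p n (m n) hM0 g = Td / (N * 3 ^ n) := by
        unfold cotypeRHS
        rw [hTd, Fintype.sum_prod_type]
      rw [hLg, hRg] at hg
      have hgK : Sd / N ≤ K * (Td / (N * 3 ^ n)) := hg
      have hSBeq : SB = lam ^ p * Sd := by
        rw [hSB, hSd, Finset.mul_sum]
        exact Finset.sum_congr rfl fun i _ => Real.mul_rpow hlam.le dist_nonneg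
      have hTBeq : TB = lam ^ p * Td := by
        rw [hTB, hTd, Finset.mul_sum]
        exact Finset.sum_congr rfl fun i _ => Real.mul_rpow hlam.le dist_nonneg
      have h7 : Sd ≤ K * Td / 3 ^ n := by
        rw [div_le_iff₀ hN0] at hgK
        have h8 : K * (Td / (N * 3 ^ n)) * N = K * Td / 3 ^ n := by
          field_simp
        linarith [hgK, h8.ge]
      rw [hSBeq, hTBeq]
      calc lam ^ p * Sd ≤ lam ^ p * (K * Td / 3 ^ n) :=
            mul_le_mul_of_nonneg_left h7 hlamp.le
        _ = K / 3 ^ n * (lam ^ p * Td) := by ring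
    -- Minkowski comparisons
    have hcard1 : ((Finset.univ : Finset ((Fin n → ZMod (m n)) × Fin n)).card : ℝ)
        = N * n := by
      rw [Finset.card_univ, Fintype.card_prod, Fintype.card_fin]
      push_cast
      rw [hcard]
    have hcard2 : ((Finset.univ :
        Finset ((Fin n → ZMod (m n)) × (Fin n → Fin 3))).card : ℝ) = N * 3 ^ n := by
      rw [Finset.card_univ, Fintype.card_prod]
      push_cast
      rw [hcard]
      norm_num
    have G1 : SA ^ (1 / p) ≤ SB ^ (1 / p) + 2 * c * (N * n) ^ (1 / p) := by
      have h9 := sum_rpow_le_of_le_add (Finset.univ)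
        (fun i : (Fin n → ZMod (m n)) × Fin n => dist (f i.1) (f (sh1 i)))
        (fun i => lam * dist (g i.1) (g (sh1 i))) hp (by linarith)
        (fun i _ => dist_nonneg) (fun i _ => mul_nonneg hlam.le dist_nonneg)
        (fun i _ => (key (f i.1) (f (sh1 i))).1)
      rwa [hcard1] at h9
    have G2 : TB ^ (1 / p) ≤ TA ^ (1 / p) + 2 * c * (N * 3 ^ n) ^ (1 / p) := by
      have h9 := sum_rpow_le_of_le_add (Finset.univ)
        (fun i : (Fin n → ZMod (m n)) × (Fin n → Fin 3) => lam * dist (g i.1) (g (sh2 i)))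
        (fun i => dist (f i.1) (f (sh2 i))) hp (by linarith)
        (fun i _ => mul_nonneg hlam.le dist_nonneg) (fun i _ => dist_nonneg)
        (fun i _ => (key (f i.1) (f (sh2 i))).2)
      rwa [hcard2] at h9
    have G3 : SB ^ (1 / p) ≤ (K / 3 ^ n) ^ (1 / p) * TB ^ (1 / p) := by
      rw [← Real.mul_rpow (by positivity) hTB0]
      exact Real.rpow_le_rpow hSB0 hcotg (by positivity)
    -- combine
    have hKq : 0 ≤ (K / 3 ^ n) ^ (1 / p) := Real.rpow_nonneg (by positivity) _
    have G4 : SA ^ (1 / p) ≤ (K / 3 ^ n) ^ (1 / p) * TA ^ (1 / p)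
        + (2 * (K / 3 ^ n) ^ (1 / p) * (N * 3 ^ n) ^ (1 / p) + 2 * (N * n) ^ (1 / p)) * c := by
      have h5 : (K / 3 ^ n) ^ (1 / p) * TB ^ (1 / p) ≤
          (K / 3 ^ n) ^ (1 / p) * (TA ^ (1 / p) + 2 * c * (N * 3 ^ n) ^ (1 / p)) :=
        mul_le_mul_of_nonneg_left G2 hKq
      have h6 := le_trans G3 h5
      calc SA ^ (1 / p) ≤ SB ^ (1 / p) + 2 * c * (N * n) ^ (1 / p) := G1
        _ ≤ (K / 3 ^ n) ^ (1 / p) * (TA ^ (1 / p) + 2 * c * (N * 3 ^ n) ^ (1 / p))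
            + 2 * c * (N * n) ^ (1 / p) := by linarith
        _ = (K / 3 ^ n) ^ (1 / p) * TA ^ (1 / p)
            + (2 * (K / 3 ^ n) ^ (1 / p) * (N * 3 ^ n) ^ (1 / p)
              + 2 * (N * n) ^ (1 / p)) * c := by ring
    -- normalize by N^(1/p)
    have hLHSeq : (cotypeLHS p n (m n) hM0 f) ^ (1 / p) = SA ^ (1 / p) / N ^ (1 / p) := by
      rw [hLeq, Real.div_rpow hSA0 hN0.le]
    have hKR : K * (TA / (N * 3 ^ n)) = (K / 3 ^ n) * TA / N := by
      rw [mul_div_assoc', div_mul_eq_mul_div, div_div]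
      ring
    have hRHSeq : (K * cotypeRHS p n (m n) hM0 f) ^ (1 / p)
        = (K / 3 ^ n) ^ (1 / p) * TA ^ (1 / p) / N ^ (1 / p) := by
      rw [hReq, hKR, Real.div_rpow (by positivity) hN0.le,
        Real.mul_rpow (by positivity) hTA0]
    rw [hLHSeq, hRHSeq, hCdef, div_mul_eq_mul_div, ← add_div]
    exact (div_le_div_iff_of_pos_right hNp).mpr G4
  -- pass to the limit c → 0
  have hfinal : (cotypeLHS p n (m n) hM0 f) ^ (1 / p) ≤
      (K * cotypeRHS p n (m n) hM0 f) ^ (1 / p) := by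
    refine le_of_forall_pos_le_add fun ε hε => ?_
    have hc : 0 < ε / (C + 1) := by positivity
    refine le_trans (claim _ hc) ?_
    have h10 : C * (ε / (C + 1)) ≤ ε := by
      rw [mul_div_assoc', div_le_iff₀ (by positivity)]
      nlinarith
    linarith
  -- undo the (1/p)-power
  have hL0 : 0 ≤ cotypeLHS p n (m n) hM0 f := cotypeLHS_nonneg p n (m n) hM0 f
  have hKR0 : 0 ≤ K * cotypeRHS p n (m n) hM0 f := mul_nonneg hK0.le hR0
  have h11 := Real.rpow_le_rpow (Real.rpow_nonneg hL0 _) hfinal hp0.le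
  rwa [← Real.rpow_mul hL0, ← Real.rpow_mul hKR0, one_div,
    inv_mul_cancel₀ hp0.ne', Real.rpow_one, Real.rpow_one] at h11
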